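/- Let N ≤ N_R be positive integers and a ∈ ℝ. The function t ↦ p(t, a) defined by the double series p(t, a) = Σ_{n=0}^∞ A_n(a) Σ_{m=0}^n binom(n,m) (−1)^m t^{N+n−m−1} e^{−t}/(N+n−m−1)! is infinitely differentiable on (0, ∞), and for every t > 0 it satisfies the third-order ordinary differential equation − t² p^{(3)}(t,a) − 2 t² p^{(2)}(t,a) − t² p^{(1)}(t,a) + (2N − 4) t p^{(2)}(t,a) − (6 − 2N − N_R − a) t p^{(1)}(t,a) + (N_R − 2) t p(t,a) − (N − 1)(N − 2) p^{(1)}(t,a) + (N − 1)(2 − N_R − a) p(t,a) = 0. -/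

import Mathlib

open Finset



/-- Pochhammer symbol `(x)ₙ = x (x+1) ⋯ (x+n-1)`. -/
noncomputable def poch (x : ℝ) (n : ℕ) : ℝ := ∏ i ∈ Finset.range n, (x + i)

/-- `A_n(a) = ((N)_n/(N_R)_n) aⁿ/n!`. -/
noncomputable def Acoef (N NR : ℕ) (a : ℝ) (n : ℕ) : ℝ :=
  (poch N n / poch NR n) * a ^ n / (n.factorial : ℝ)

/-- The (normalized) ZF SNR density
`p(t,a) = Σ_n A_n(a) Σ_{m=0}^n C(n,m) (−1)^m t^{N+n−m−1} e^{−t}/(N+n−m−1)!`. -/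
noncomputable def pdfZF (N NR : ℕ) (t a : ℝ) : ℝ :=
  ∑' n : ℕ, Acoef N NR a n *
    ∑ m ∈ Finset.range (n + 1),
      (n.choose m : ℝ) * (-1 : ℝ) ^ m * t ^ (N + n - m - 1) * Real.exp (-t)
        / ((N + n - m - 1).factorial : ℝ)


noncomputable def PhiZ (k : ℤ) (t : ℝ) : ℝ :=
  if 0 ≤ k then t ^ k.toNat * Real.exp (-t) / (k.toNat).factorial else 0

lemma phiZ_of_neg {k : ℤ} (hk : k < 0) : PhiZ k = fun _ => 0 := by
  funext t; simp [PhiZ, not_le.2 hk]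

lemma phiZ_of_nonneg {k : ℤ} (hk : 0 ≤ k) (t : ℝ) :
    PhiZ k t = t ^ k.toNat * Real.exp (-t) / (k.toNat).factorial := by
  simp [PhiZ, hk]

lemma abs_phiZ_le_one {k : ℤ} {t : ℝ} (ht : 0 ≤ t) : |PhiZ k t| ≤ 1 := by
  rcases lt_or_ge k 0 with hk | hk
  · rw [phiZ_of_neg hk]; norm_num
  · rw [phiZ_of_nonneg hk]
    have h1 : t ^ k.toNat / (k.toNat).factorial ≤ Real.exp t :=
      Real.pow_div_factorial_le_exp t ht _
    have h2 : (0:ℝ) < Real.exp t := Real.exp_pos t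
    rw [abs_of_nonneg (by positivity)]
    have h4 : t ^ k.toNat * Real.exp (-t) / (k.toNat).factorial
        = (t ^ k.toNat / (k.toNat).factorial) * Real.exp (-t) := by ring
    rw [h4, Real.exp_neg, mul_inv_le_iff₀ h2, one_mul]
    exact h1

lemma t_mul_phiZ (k : ℤ) (t : ℝ) :
    t * PhiZ k t = ((k + 1 : ℤ) : ℝ) * PhiZ (k + 1) t := by
  rcases lt_or_ge k 0 with hk | hk
  · rw [phiZ_of_neg hk]
    rcases lt_or_ge (k+1) 0 with hk1 | hk1
    · rw [phiZ_of_neg hk1]; simp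
    · have h0 : k + 1 = 0 := le_antisymm (by omega) hk1
      simp [h0]
  · rw [phiZ_of_nonneg hk, phiZ_of_nonneg (by omega)]
    have h1 : (k+1).toNat = k.toNat + 1 := by omega
    have h2 : ((k + 1 : ℤ) : ℝ) = ((k.toNat : ℝ) + 1) := by
      exact_mod_cast (by omega : k + 1 = (k.toNat : ℤ) + 1)
    rw [h1, h2, Nat.factorial_succ]
    have hfac : ((k.toNat).factorial : ℝ) ≠ 0 := by positivity
    push_cast
    field_simp
    ring

lemma hasDerivAt_phiZ (k : ℤ) (t : ℝ) :
    HasDerivAt (PhiZ k) (PhiZ (k - 1) t - PhiZ k t) t := by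
  rcases lt_or_ge k 0 with hk | hk
  · rw [phiZ_of_neg hk, phiZ_of_neg (by omega : k - 1 < 0)]
    simpa using hasDerivAt_const t (0:ℝ)
  · have hexp : HasDerivAt (fun s : ℝ => Real.exp (-s)) (-Real.exp (-t)) t := by
      simpa using (hasDerivAt_neg t).exp
    rcases eq_or_lt_of_le hk with hk0 | hk0
    · rw [phiZ_of_neg (by omega : k - 1 < 0)]
      have hfun : PhiZ k = fun s => Real.exp (-s) := by
        funext s; rw [phiZ_of_nonneg hk]; simp [← hk0]
      rw [hfun]
      simp only [← hk0]
      simpa using hexp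
    · have hkn : 1 ≤ k.toNat := by omega
      have hfun : PhiZ k = fun s => s ^ k.toNat * Real.exp (-s) / (k.toNat).factorial := by
        funext s; rw [phiZ_of_nonneg hk]
      rw [hfun, phiZ_of_nonneg (by omega : (0:ℤ) ≤ k - 1)]
      have h1 : HasDerivAt (fun s : ℝ => s ^ k.toNat) (k.toNat * t ^ (k.toNat - 1)) t :=
        hasDerivAt_pow _ _
      have h3 := (h1.mul hexp).div_const ((k.toNat).factorial : ℝ)
      convert h3 using 1
      rfl
      rfl
      rfl
      have he : (k-1).toNat = k.toNat - 1 := by omega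
      rw [he]
      have hfac : ((k.toNat).factorial : ℝ) = (k.toNat : ℝ) * ((k.toNat - 1).factorial : ℝ) := by
        conv_lhs => rw [← Nat.succ_pred_eq_of_pos (by omega : 0 < k.toNat)]
        rw [Nat.factorial_succ]
        push_cast [Nat.pred_eq_sub_one, Nat.cast_sub (by omega : 1 ≤ k.toNat)]
        ring
      rw [hfac]
      have h5 : ((k.toNat - 1).factorial : ℝ) ≠ 0 := by positivity
      have h6 : (k.toNat : ℝ) ≠ 0 := by
        simp only [ne_eq, Nat.cast_eq_zero]; omega
      field_simp
      ring

noncomputable def G (q : ℕ) (k : ℤ) (t : ℝ) : ℝ :=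
  ∑ i ∈ range (q + 1), (q.choose i : ℝ) * (-1) ^ (q + i) * PhiZ (k - i) t

lemma G_succ (q : ℕ) (k : ℤ) (t : ℝ) :
    G (q + 1) k t
      = ∑ i ∈ range (q + 1),
          (q.choose i : ℝ) * (-1) ^ (q + i) * (PhiZ (k - i - 1) t - PhiZ (k - i) t) := by
  have hC : (∑ i ∈ range (q + 1),
          -((q.choose (i+1) : ℝ) * (-1) ^ (q + i) * PhiZ (k - i - 1) t))
        + (-1 : ℝ) ^ q * PhiZ k t
      = ∑ i ∈ range (q + 1), (q.choose i : ℝ) * (-1) ^ (q + i) * PhiZ (k - i) t := by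
    rw [Finset.sum_range_succ]
    simp only [Nat.choose_succ_self, Nat.cast_zero, zero_mul, mul_zero, neg_zero, add_zero]
    rw [Finset.sum_range_succ'
      (fun i => (q.choose i : ℝ) * (-1) ^ (q + i) * PhiZ (k - i) t) q]
    congr 1
    · apply Finset.sum_congr rfl
      intro i _
      push_cast
      rw [show k - ((i:ℤ)+1) = k - i - 1 from by ring]
      ring
    · norm_num
  have e1 : G (q+1) k t
      = (∑ i ∈ range (q + 1),
          (((q+1).choose (i+1) : ℝ)) * (-1) ^ (q + 1 + (i+1)) * PhiZ (k - (i+1:ℕ)) t)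
        + ((q+1).choose 0 : ℝ) * (-1) ^ (q+1+0) * PhiZ (k - (0:ℕ)) t := by
    rw [G]
    exact Finset.sum_range_succ'
      (fun i => (((q+1).choose i : ℝ)) * (-1) ^ (q + 1 + i) * PhiZ (k - i) t) (q+1)
  rw [e1]
  simp only [mul_sub]
  rw [Finset.sum_sub_distrib, ← hC]
  have e2 : ∑ i ∈ range (q + 1),
      (((q+1).choose (i+1) : ℝ)) * (-1) ^ (q + 1 + (i+1)) * PhiZ (k - (i+1:ℕ)) t
      = ∑ i ∈ range (q + 1),
        ((q.choose i : ℝ) * (-1) ^ (q + i) * PhiZ (k - i - 1) t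
          + -(-((q.choose (i+1) : ℝ) * (-1) ^ (q + i) * PhiZ (k - i - 1) t))) := by
    apply Finset.sum_congr rfl
    intro i _
    push_cast [Nat.choose_succ_succ]
    rw [show k - ((i:ℤ)+1) = k - i - 1 from by ring]
    ring
  rw [e2, Finset.sum_add_distrib, Finset.sum_neg_distrib]
  push_cast
  rw [show k - (0:ℤ) = k from by ring]
  simp only [Nat.choose_zero_right, Nat.cast_one]
  ring

lemma hasDerivAt_G (q : ℕ) (k : ℤ) (t : ℝ) :
    HasDerivAt (fun s => G q k s) (G (q + 1) k t) t := by
  rw [G_succ]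
  have h : ∀ i ∈ range (q + 1),
      HasDerivAt (fun s => (q.choose i : ℝ) * (-1) ^ (q + i) * PhiZ (k - i) s)
        ((q.choose i : ℝ) * (-1) ^ (q + i) * (PhiZ (k - i - 1) t - PhiZ (k - i) t)) t :=
    fun i _ => (hasDerivAt_phiZ (k - i) t).const_mul _
  simpa [G] using HasDerivAt.fun_sum h

lemma abs_G_le {q : ℕ} {k : ℤ} {t : ℝ} (ht : 0 ≤ t) : |G q k t| ≤ 2 ^ q := by
  calc |G q k t| ≤ ∑ i ∈ range (q + 1), |(q.choose i : ℝ) * (-1) ^ (q + i) * PhiZ (k - i) t| :=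
        Finset.abs_sum_le_sum_abs _ _
    _ ≤ ∑ i ∈ range (q + 1), (q.choose i : ℝ) := by
        apply Finset.sum_le_sum
        intro i _
        rw [abs_mul, abs_mul, abs_pow, abs_neg, abs_one, one_pow, mul_one,
          Nat.abs_cast]
        calc (q.choose i : ℝ) * |PhiZ (k - i) t| ≤ (q.choose i : ℝ) * 1 :=
              mul_le_mul_of_nonneg_left (abs_phiZ_le_one ht) (by positivity)
          _ = (q.choose i : ℝ) := mul_one _
    _ = 2 ^ q := by exact_mod_cast congrArg (Nat.cast : ℕ → ℝ) (Nat.sum_range_choose q)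

noncomputable def FF (N : ℕ) (q n : ℕ) (t : ℝ) : ℝ :=
  ∑ m ∈ range (n + 1), (n.choose m : ℝ) * (-1) ^ m * G q ((N : ℤ) + n - 1 - m) t

lemma hasDerivAt_FF (N q n : ℕ) (t : ℝ) :
    HasDerivAt (fun s => FF N q n s) (FF N (q + 1) n t) t := by
  have h : ∀ m ∈ range (n + 1),
      HasDerivAt (fun s => (n.choose m : ℝ) * (-1) ^ m * G q ((N : ℤ) + n - 1 - m) s)
        ((n.choose m : ℝ) * (-1) ^ m * G (q + 1) ((N : ℤ) + n - 1 - m) t) t :=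
    fun m _ => (hasDerivAt_G q _ t).const_mul _
  simpa [FF] using HasDerivAt.fun_sum h

lemma abs_FF_le {N q n : ℕ} {t : ℝ} (ht : 0 ≤ t) : |FF N q n t| ≤ 2 ^ n * 2 ^ q := by
  calc |FF N q n t|
      ≤ ∑ m ∈ range (n + 1), |(n.choose m : ℝ) * (-1) ^ m * G q ((N : ℤ) + n - 1 - m) t| :=
        Finset.abs_sum_le_sum_abs _ _
    _ ≤ ∑ m ∈ range (n + 1), (n.choose m : ℝ) * 2 ^ q := by
        apply Finset.sum_le_sum
        intro m _
        rw [abs_mul, abs_mul, abs_pow, abs_neg, abs_one, one_pow, mul_one, Nat.abs_cast]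
        exact mul_le_mul_of_nonneg_left (abs_G_le ht) (by positivity)
    _ = 2 ^ n * 2 ^ q := by
        rw [← Finset.sum_mul]
        congr 1
        exact_mod_cast congrArg (Nat.cast : ℕ → ℝ) (Nat.sum_range_choose n)

lemma poch_pos {x : ℝ} (hx : 0 < x) (n : ℕ) : 0 < poch x n :=
  Finset.prod_pos fun i _ => by positivity

lemma abs_Acoef_le {N NR : ℕ} (hN : 0 < N) (hNNR : N ≤ NR) (a : ℝ) (n : ℕ) :
    |Acoef N NR a n| ≤ |a| ^ n / n.factorial := by
  have hNpos : (0:ℝ) < N := by exact_mod_cast hN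
  have hNRpos : (0:ℝ) < NR := lt_of_lt_of_le hNpos (by exact_mod_cast hNNR)
  have h1 : 0 < poch N n := poch_pos hNpos n
  have h2 : 0 < poch NR n := poch_pos hNRpos n
  have hle : poch N n ≤ poch NR n := by
    apply Finset.prod_le_prod
    · intro i _; positivity
    · intro i _
      have : (N:ℝ) ≤ NR := by exact_mod_cast hNNR
      linarith
  have hratio : poch N n / poch NR n ≤ 1 := (div_le_one h2).2 hle
  rw [Acoef, abs_div, abs_mul, abs_pow, Nat.abs_cast,
    abs_of_pos (div_pos h1 h2)]
  apply div_le_div_of_nonneg_right ?_ (by positivity)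
  calc poch N n / poch NR n * |a| ^ n ≤ 1 * |a| ^ n :=
        mul_le_mul_of_nonneg_right hratio (by positivity)
    _ = |a| ^ n := one_mul _

noncomputable def U (N NR : ℕ) (a : ℝ) (q n : ℕ) (t : ℝ) : ℝ :=
  Acoef N NR a n * FF N q n t

lemma hasDerivAt_U (N NR : ℕ) (a : ℝ) (q n : ℕ) (t : ℝ) :
    HasDerivAt (fun s => U N NR a q n s) (U N NR a (q + 1) n t) t :=
  (hasDerivAt_FF N q n t).const_mul _

lemma abs_U_le {N NR : ℕ} (hN : 0 < N) (hNNR : N ≤ NR) (a : ℝ) (q n : ℕ) {t : ℝ}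
    (ht : 0 ≤ t) : |U N NR a q n t| ≤ 2 ^ q * ((2 * |a|) ^ n / n.factorial) := by
  rw [U, abs_mul]
  calc |Acoef N NR a n| * |FF N q n t|
      ≤ (|a| ^ n / n.factorial) * (2 ^ n * 2 ^ q) := by
        apply mul_le_mul (abs_Acoef_le hN hNNR a n) (abs_FF_le ht) (abs_nonneg _)
        positivity
    _ = 2 ^ q * ((2 * |a|) ^ n / n.factorial) := by
        rw [mul_pow]
        ring

lemma summable_bnd (a : ℝ) (q : ℕ) :
    Summable (fun n => 2 ^ q * ((2 * |a|) ^ n / n.factorial)) :=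
  (Real.summable_pow_div_factorial (2 * |a|)).mul_left _

lemma summable_U {N NR : ℕ} (hN : 0 < N) (hNNR : N ≤ NR) (a : ℝ) (q : ℕ) {t : ℝ}
    (ht : 0 ≤ t) : Summable (fun n => U N NR a q n t) := by
  apply Summable.of_norm_bounded (summable_bnd a q)
  intro n
  simpa using abs_U_le hN hNNR a q n ht

noncomputable def SS (N NR : ℕ) (a : ℝ) (q : ℕ) (t : ℝ) : ℝ := ∑' n, U N NR a q n t

lemma hasDerivAt_SS {N NR : ℕ} (hN : 0 < N) (hNNR : N ≤ NR) (a : ℝ) (q : ℕ) {t : ℝ}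
    (ht : t ∈ Set.Ioi (0:ℝ)) :
    HasDerivAt (SS N NR a q) (SS N NR a (q + 1) t) t := by
  apply hasDerivAt_tsum_of_isPreconnected (summable_bnd a (q+1)) isOpen_Ioi
    (isPreconnected_Ioi) (fun n y _ => hasDerivAt_U N NR a q n y)
    (fun n y hy => by simpa using abs_U_le hN hNNR a (q+1) n (le_of_lt hy))
    (Set.mem_Ioi.2 one_pos) (summable_U hN hNNR a q zero_le_one) ht

lemma G_zero (k : ℤ) (t : ℝ) : G 0 k t = PhiZ k t := by
  simp [G]

lemma pdfZF_eq_SS {N NR : ℕ} (hN : 0 < N) (a : ℝ) :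
    (fun t => pdfZF N NR t a) = SS N NR a 0 := by
  funext t
  rw [pdfZF, SS]
  apply tsum_congr
  intro n
  rw [U, FF]
  congr 1
  apply Finset.sum_congr rfl
  intro m hm
  have hm' : m ≤ n := Nat.lt_succ_iff.1 (Finset.mem_range.1 hm)
  rw [G_zero]
  have hk : (0:ℤ) ≤ (N : ℤ) + n - 1 - m := by omega
  rw [phiZ_of_nonneg hk]
  have htn : ((N : ℤ) + n - 1 - m).toNat = N + n - m - 1 := by omega
  rw [htn]
  ring

lemma deriv_SS {N NR : ℕ} (hN : 0 < N) (hNNR : N ≤ NR) (a : ℝ) (q : ℕ) {t : ℝ}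
    (ht : t ∈ Set.Ioi (0:ℝ)) : deriv (SS N NR a q) t = SS N NR a (q + 1) t :=
  (hasDerivAt_SS hN hNNR a q ht).deriv

lemma deriv_SS_eventually {N NR : ℕ} (hN : 0 < N) (hNNR : N ≤ NR) (a : ℝ) (q : ℕ) {t : ℝ}
    (ht : t ∈ Set.Ioi (0:ℝ)) : deriv (SS N NR a q) =ᶠ[nhds t] SS N NR a (q + 1) := by
  filter_upwards [isOpen_Ioi.mem_nhds ht] with s hs
  exact deriv_SS hN hNNR a q hs

lemma iteratedDeriv_SS {N NR : ℕ} (hN : 0 < N) (hNNR : N ≤ NR) (a : ℝ) (j : ℕ) {t : ℝ}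
    (ht : t ∈ Set.Ioi (0:ℝ)) : iteratedDeriv j (SS N NR a 0) t = SS N NR a j t := by
  induction j generalizing t with
  | zero => simp
  | succ j ih =>
    rw [iteratedDeriv_succ]
    have hev : iteratedDeriv j (SS N NR a 0) =ᶠ[nhds t] SS N NR a j := by
      filter_upwards [isOpen_Ioi.mem_nhds ht] with s hs
      exact ih hs
    rw [hev.deriv_eq, deriv_SS hN hNNR a j ht]

lemma contDiffOn_SS {N NR : ℕ} (hN : 0 < N) (hNNR : N ≤ NR) (a : ℝ) (m : ℕ) (q : ℕ) :
    ContDiffOn ℝ m (SS N NR a q) (Set.Ioi 0) := by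
  induction m generalizing q with
  | zero =>
    rw [show ((0:ℕ) : WithTop ℕ∞) = 0 from rfl, contDiffOn_zero]
    exact fun t ht => (hasDerivAt_SS hN hNNR a q ht).continuousAt.continuousWithinAt
  | succ m ih =>
    have hcast : ((m + 1 : ℕ) : WithTop ℕ∞) = (m : WithTop ℕ∞) + 1 := by norm_cast
    rw [hcast, contDiffOn_succ_iff_deriv_of_isOpen isOpen_Ioi]
    refine ⟨fun t ht => ((hasDerivAt_SS hN hNNR a q ht).differentiableAt).differentiableWithinAt,
      ?_, ?_⟩
    · intro h; exact absurd h (by simp)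
    · exact (ih (q + 1)).congr fun t ht => deriv_SS hN hNNR a q ht

lemma G_one (k : ℤ) (t : ℝ) : G 1 k t = PhiZ (k - 1) t - PhiZ k t := by
  norm_num [G, Finset.sum_range_succ]
  ring

lemma G_two (k : ℤ) (t : ℝ) :
    G 2 k t = PhiZ (k - 2) t - 2 * PhiZ (k - 1) t + PhiZ k t := by
  norm_num [G, Finset.sum_range_succ]
  ring

lemma G_three (k : ℤ) (t : ℝ) :
    G 3 k t = PhiZ (k - 3) t - 3 * PhiZ (k - 2) t + 3 * PhiZ (k - 1) t - PhiZ k t := by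
  norm_num [G, Finset.sum_range_succ]
  ring

lemma L0_phi (N NR : ℕ) (k : ℤ) (t : ℝ) :
    -t^2 * G 3 k t - 2*t^2 * G 2 k t - t^2 * G 1 k t + (2*(N:ℝ)-4)*t*G 2 k t
      - (6-2*(N:ℝ)-(NR:ℝ))*t*G 1 k t + ((NR:ℝ)-2)*t*G 0 k t
      - ((N:ℝ)-1)*((N:ℝ)-2)*G 1 k t + ((N:ℝ)-1)*(2-(NR:ℝ))*G 0 k t
    = -((k:ℝ) - N)*((k:ℝ) - N + 1) * PhiZ (k-1) t
      + ((k:ℝ) - N + 1)*((k:ℝ) - N + NR) * PhiZ k t := by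
  rw [G_one, G_two, G_three, G_zero]
  have h1 := t_mul_phiZ (k-3) t
  rw [show k-3+1 = k-2 from by ring] at h1
  have h2 := t_mul_phiZ (k-2) t
  rw [show k-2+1 = k-1 from by ring] at h2
  have h3 := t_mul_phiZ (k-1) t
  rw [show k-1+1 = k from by ring] at h3
  push_cast at h1 h2 h3
  linear_combination (-t)*h1 + (t + 2*(N:ℝ) - 2 - (k:ℝ))*h2 + ((k:ℝ) + (NR:ℝ) + 1 - 2*(N:ℝ))*h3

lemma M_phi (N : ℕ) (k : ℤ) (t : ℝ) :
    t * G 1 k t - ((N:ℝ) - 1) * G 0 k t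
      = ((k:ℝ) - N + 1) * PhiZ k t - ((k:ℝ) + 1) * PhiZ (k + 1) t := by
  rw [G_one, G_zero]
  have h3 := t_mul_phiZ (k-1) t
  rw [show k-1+1 = k from by ring] at h3
  have h4 := t_mul_phiZ k t
  push_cast at h3 h4
  linear_combination h3 - h4

lemma choose_cast_id1 (n m : ℕ) (hm : m ≤ n) :
    ((n+1).choose (m+1) : ℝ) * ((m:ℝ)+1) = ((n:ℝ)+1) * (n.choose m : ℝ) := by
  have h := Nat.add_one_mul_choose_eq n m
  exact_mod_cast congrArg (Nat.cast : ℕ → ℝ) h.symm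

lemma choose_cast_id2 (n m : ℕ) (hm : m < n) :
    ((n).choose (m+1) : ℝ) * ((m:ℝ)+1) = ((n:ℝ) - m) * (n.choose m : ℝ) := by
  have h := Nat.choose_succ_right_eq n m
  have h2 : ((n.choose (m+1) * (m+1) : ℕ) : ℝ) = ((n.choose m * (n - m) : ℕ) : ℝ) := by
    exact_mod_cast congrArg (Nat.cast : ℕ → ℝ) h
  push_cast [Nat.cast_sub hm.le] at h2
  linarith [h2]

lemma choose_cast_id3 (n m : ℕ) (hm : m ≤ n) :
    ((n+1).choose m : ℝ) * ((n:ℝ) + 1 - m) = ((n:ℝ)+1) * (n.choose m : ℝ) := by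
  have h := Nat.choose_succ_right_eq (n+1) m
  have h2 : (((n+1).choose (m+1) * (m+1) : ℕ) : ℝ) = (((n+1).choose m * (n + 1 - m) : ℕ) : ℝ) :=
    congrArg (Nat.cast : ℕ → ℝ) h
  push_cast [Nat.cast_sub (by omega : m ≤ n + 1)] at h2
  have h1 := choose_cast_id1 n m hm
  linarith [h1, h2]

lemma key (N NR : ℕ) (n : ℕ) (t : ℝ) :
    ((N:ℝ)+n) * (-t^2 * FF N 3 (n+1) t - 2*t^2 * FF N 2 (n+1) t - t^2 * FF N 1 (n+1) t
      + (2*(N:ℝ)-4)*t*FF N 2 (n+1) t - (6-2*(N:ℝ)-(NR:ℝ))*t*FF N 1 (n+1) t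
      + ((NR:ℝ)-2)*t*FF N 0 (n+1) t - ((N:ℝ)-1)*((N:ℝ)-2)*FF N 1 (n+1) t
      + ((N:ℝ)-1)*(2-(NR:ℝ))*FF N 0 (n+1) t)
    + ((NR:ℝ)+n)*((n:ℝ)+1) * (t * FF N 1 n t - ((N:ℝ)-1) * FF N 0 n t) = 0 := by
  -- Step 1: rewrite the L0 part as a single sum
  have hL : -t^2 * FF N 3 (n+1) t - 2*t^2 * FF N 2 (n+1) t - t^2 * FF N 1 (n+1) t
      + (2*(N:ℝ)-4)*t*FF N 2 (n+1) t - (6-2*(N:ℝ)-(NR:ℝ))*t*FF N 1 (n+1) t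
      + ((NR:ℝ)-2)*t*FF N 0 (n+1) t - ((N:ℝ)-1)*((N:ℝ)-2)*FF N 1 (n+1) t
      + ((N:ℝ)-1)*(2-(NR:ℝ))*FF N 0 (n+1) t
      = ∑ m ∈ range (n+2), ((n+1).choose m : ℝ) * (-1)^m *
          (-((n:ℝ)-m)*((n:ℝ)-m+1) * PhiZ ((N:ℤ)+n-1-m) t
            + ((n:ℝ)-m+1)*((n:ℝ)-m+NR) * PhiZ ((N:ℤ)+n-m) t) := by
    simp only [FF, Finset.mul_sum, ← Finset.sum_neg_distrib, ← Finset.sum_add_distrib,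
      ← Finset.sum_sub_distrib]
    apply Finset.sum_congr rfl
    intro m hm
    have h := L0_phi N NR ((N:ℤ)+n-m) t
    rw [show (N:ℤ)+n-m-1 = (N:ℤ)+n-1-m from by ring] at h
    rw [show (N:ℤ)+((n:ℕ)+1:ℕ)-1-(m:ℤ) = (N:ℤ)+n-m from by push_cast; ring]
    push_cast at h ⊢
    linear_combination ((n+1).choose m : ℝ) * (-1)^m * h
  -- Step 2: rewrite the M part as a single sum
  have hM : t * FF N 1 n t - ((N:ℝ)-1) * FF N 0 n t
      = ∑ m ∈ range (n+1), ((n).choose m : ℝ) * (-1)^m *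
          (((n:ℝ)-m) * PhiZ ((N:ℤ)+n-1-m) t - ((N:ℝ)+n-m) * PhiZ ((N:ℤ)+n-m) t) := by
    simp only [FF, Finset.mul_sum, ← Finset.sum_sub_distrib]
    apply Finset.sum_congr rfl
    intro m hm
    have h := M_phi N ((N:ℤ)+n-1-m) t
    rw [show (N:ℤ)+n-1-m+1 = (N:ℤ)+n-m from by ring] at h
    push_cast at h ⊢
    linear_combination ((n).choose m : ℝ) * (-1)^m * h
  rw [hL, hM]
  -- abbreviations
  set Pa : ℕ → ℝ := fun m => ((n+1).choose m : ℝ) * (-1)^m *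
      (-((n:ℝ)-m)*((n:ℝ)-m+1)) * PhiZ ((N:ℤ)+n-1-m) t with hPa
  set Pb : ℕ → ℝ := fun m => ((n+1).choose m : ℝ) * (-1)^m *
      (((n:ℝ)-m+1)*((n:ℝ)-m+NR)) * PhiZ ((N:ℤ)+n-m) t with hPb
  set Qa : ℕ → ℝ := fun m => ((n).choose m : ℝ) * (-1)^m *
      ((n:ℝ)-m) * PhiZ ((N:ℤ)+n-1-m) t with hQa
  set Qb : ℕ → ℝ := fun m => ((n).choose m : ℝ) * (-1)^m *
      ((N:ℝ)+n-m) * PhiZ ((N:ℤ)+n-m) t with hQb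
  have esplit1 : ∑ m ∈ range (n+2), ((n+1).choose m : ℝ) * (-1)^m *
          (-((n:ℝ)-m)*((n:ℝ)-m+1) * PhiZ ((N:ℤ)+n-1-m) t
            + ((n:ℝ)-m+1)*((n:ℝ)-m+NR) * PhiZ ((N:ℤ)+n-m) t)
      = ∑ m ∈ range (n+2), (Pa m + Pb m) := by
    apply Finset.sum_congr rfl
    intro m _
    simp only [hPa, hPb]
    ring
  have esplit2 : ∑ m ∈ range (n+1), ((n).choose m : ℝ) * (-1)^m *
          (((n:ℝ)-m) * PhiZ ((N:ℤ)+n-1-m) t - ((N:ℝ)+n-m) * PhiZ ((N:ℤ)+n-m) t)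
      = ∑ m ∈ range (n+1), (Qa m - Qb m) := by
    apply Finset.sum_congr rfl
    intro m _
    simp only [hQa, hQb]
    ring
  rw [esplit1, esplit2, Finset.sum_add_distrib, Finset.sum_sub_distrib]
  -- truncate the two `a`-indexed sums
  have ePa : ∑ m ∈ range (n+2), Pa m = ∑ m ∈ range n, Pa m := by
    rw [Finset.sum_range_succ, Finset.sum_range_succ]
    have h1 : Pa (n+1) = 0 := by simp only [hPa]; push_cast; ring
    have h2 : Pa n = 0 := by simp only [hPa]; push_cast; ring
    rw [h1, h2, add_zero, add_zero]
  have eQa : ∑ m ∈ range (n+1), Qa m = ∑ m ∈ range n, Qa m := by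
    rw [Finset.sum_range_succ]
    have h2 : Qa n = 0 := by simp only [hQa]; push_cast; ring
    rw [h2, add_zero]
  -- shift the two `b`-indexed sums
  have ePb : ∑ m ∈ range (n+2), Pb m = ∑ m ∈ range (n+1), Pb (m+1) + Pb 0 :=
    Finset.sum_range_succ' Pb (n+1)
  have eQb : ∑ m ∈ range (n+1), Qb m = ∑ m ∈ range n, Qb (m+1) + Qb 0 :=
    Finset.sum_range_succ' Qb n
  have ePb' : ∑ m ∈ range (n+1), Pb (m+1) = ∑ m ∈ range n, Pb (m+1) := by
    rw [Finset.sum_range_succ]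
    have h1 : Pb (n+1) = 0 := by simp only [hPb]; push_cast; ring
    rw [h1, add_zero]
  rw [ePa, eQa, ePb, ePb', eQb]
  -- the main per-term cancellation
  have emain : ∑ m ∈ range n,
      (((N:ℝ)+n) * Pa m + ((N:ℝ)+n) * Pb (m+1)
        + ((NR:ℝ)+n)*((n:ℝ)+1) * Qa m - ((NR:ℝ)+n)*((n:ℝ)+1) * Qb (m+1)) = 0 := by
    apply Finset.sum_eq_zero
    intro m hm
    have hmn : m < n := Finset.mem_range.1 hm
    simp only [hPa, hPb, hQa, hQb]
    have harg1 : (N:ℤ)+n-(m+1:ℕ) = (N:ℤ)+n-1-m := by push_cast; ring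
    rw [harg1]
    have hne : ((m:ℝ)+1) ≠ 0 := by positivity
    have hc1 := choose_cast_id1 n m hmn.le
    have hc2 := choose_cast_id2 n m hmn
    have hc3 := choose_cast_id3 n m hmn.le
    apply mul_left_cancel₀ hne
    rw [mul_zero]
    push_cast
    linear_combination
      (-(((N:ℝ)+n)) * (-1)^m * ((n:ℝ)-m) * ((n:ℝ)-m-1+NR) * PhiZ ((N:ℤ)+n-1-m) t) * hc1
      + (((NR:ℝ)+n)*((n:ℝ)+1) * (-1)^m * ((N:ℝ)+n-m-1) * PhiZ ((N:ℤ)+n-1-m) t) * hc2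
      + (-(((N:ℝ)+n)) * (-1)^m * ((n:ℝ)-m) * ((m:ℝ)+1) * PhiZ ((N:ℤ)+n-1-m) t) * hc3
  have expand : ∑ m ∈ range n,
      (((N:ℝ)+n) * Pa m + ((N:ℝ)+n) * Pb (m+1)
        + ((NR:ℝ)+n)*((n:ℝ)+1) * Qa m - ((NR:ℝ)+n)*((n:ℝ)+1) * Qb (m+1))
      = ((N:ℝ)+n) * ∑ m ∈ range n, Pa m + ((N:ℝ)+n) * ∑ m ∈ range n, Pb (m+1)
        + ((NR:ℝ)+n)*((n:ℝ)+1) * ∑ m ∈ range n, Qa m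
        - ((NR:ℝ)+n)*((n:ℝ)+1) * ∑ m ∈ range n, Qb (m+1) := by
    rw [Finset.mul_sum, Finset.mul_sum, Finset.mul_sum, Finset.mul_sum,
      ← Finset.sum_add_distrib, ← Finset.sum_add_distrib, ← Finset.sum_sub_distrib]
  rw [expand] at emain
  have hzero : ((N:ℝ)+n) * Pb 0 - ((NR:ℝ)+n)*((n:ℝ)+1) * Qb 0 = 0 := by
    simp only [hPb, hQb]
    push_cast
    simp only [Nat.choose_zero_right, Nat.cast_one, Nat.cast_zero, sub_zero]
    push_cast
    ring
  linear_combination emain + hzero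

noncomputable def AA (N NR : ℕ) (a : ℝ) (n : ℕ) (t : ℝ) : ℝ :=
  -t^2 * U N NR a 3 n t - 2*t^2 * U N NR a 2 n t - t^2 * U N NR a 1 n t
  + (2*(N:ℝ)-4)*t*U N NR a 2 n t - (6-2*(N:ℝ)-(NR:ℝ))*t*U N NR a 1 n t
  + ((NR:ℝ)-2)*t*U N NR a 0 n t - ((N:ℝ)-1)*((N:ℝ)-2)*U N NR a 1 n t
  + ((N:ℝ)-1)*(2-(NR:ℝ))*U N NR a 0 n t

noncomputable def BB (N NR : ℕ) (a : ℝ) (n : ℕ) (t : ℝ) : ℝ :=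
  a * (t * U N NR a 1 n t - ((N:ℝ)-1) * U N NR a 0 n t)

lemma FF_zero_n (N q : ℕ) (t : ℝ) : FF N q 0 t = G q ((N:ℤ)-1) t := by
  rw [FF]
  rw [Finset.sum_range_one]
  norm_num

lemma AA_zero (N NR : ℕ) (a t : ℝ) : AA N NR a 0 t = 0 := by
  have h := L0_phi N NR ((N:ℤ)-1) t
  push_cast at h
  simp only [AA, U, FF_zero_n]
  linear_combination (Acoef N NR a 0) * h

lemma Acoef_rec {N NR : ℕ} (hN : 0 < N) (hNNR : N ≤ NR) (a : ℝ) (n : ℕ) :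
    Acoef N NR a (n+1) * (((NR:ℝ)+n) * ((n:ℝ)+1)) = a * Acoef N NR a n * ((N:ℝ)+n) := by
  have hNpos : (0:ℝ) < N := by exact_mod_cast hN
  have hNRpos : (0:ℝ) < NR := lt_of_lt_of_le hNpos (by exact_mod_cast hNNR)
  have h1 : poch N (n+1) = poch N n * ((N:ℝ)+n) := Finset.prod_range_succ _ _
  have h2 : poch NR (n+1) = poch NR n * ((NR:ℝ)+n) := Finset.prod_range_succ _ _
  have h3 : ((n+1).factorial : ℝ) = ((n:ℝ)+1) * (n.factorial : ℝ) := by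
    rw [Nat.factorial_succ]; push_cast; ring
  have hp1 : poch NR n ≠ 0 := ne_of_gt (poch_pos hNRpos n)
  have hp2 : ((NR:ℝ)+n) ≠ 0 := by positivity
  have hp3 : (n.factorial : ℝ) ≠ 0 := by positivity
  have hp4 : ((n:ℝ)+1) ≠ 0 := by positivity
  rw [Acoef, Acoef, h1, h2, h3]
  field_simp
  ring

lemma AA_succ {N NR : ℕ} (hN : 0 < N) (hNNR : N ≤ NR) (a : ℝ) (n : ℕ) (t : ℝ) :
    AA N NR a (n+1) t = - BB N NR a n t := by
  have hkey := key N NR n t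
  have hrec := Acoef_rec hN hNNR a n
  have hNn : ((N:ℝ)+n) ≠ 0 := by
    have : (0:ℝ) < N := by exact_mod_cast hN
    positivity
  apply mul_left_cancel₀ hNn
  simp only [AA, BB, U]
  linear_combination (Acoef N NR a (n+1)) * hkey
    - (t * FF N 1 n t - ((N:ℝ)-1) * FF N 0 n t) * hrec

/-- `t ↦ p(t,a)` is infinitely differentiable on `(0,∞)` and satisfies there the
third-order ODE
`−t² p⁽³⁾ − 2t² p⁽²⁾ − t² p⁽¹⁾ + (2N−4) t p⁽²⁾ − (6−2N−N_R−a) t p⁽¹⁾ + (N_R−2) t p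
  − (N−1)(N−2) p⁽¹⁾ + (N−1)(2−N_R−a) p = 0`. -/
theorem stmt10 (N NR : ℕ) (hN : 0 < N) (hNNR : N ≤ NR) (a : ℝ) :
    ContDiffOn ℝ (⊤ : ℕ∞) (fun t => pdfZF N NR t a) (Set.Ioi 0) ∧
    ∀ t : ℝ, 0 < t →
      -t ^ 2 * iteratedDeriv 3 (fun t' => pdfZF N NR t' a) t
        - 2 * t ^ 2 * iteratedDeriv 2 (fun t' => pdfZF N NR t' a) t
        - t ^ 2 * deriv (fun t' => pdfZF N NR t' a) t
        + (2 * (N : ℝ) - 4) * t * iteratedDeriv 2 (fun t' => pdfZF N NR t' a) t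
        - (6 - 2 * (N : ℝ) - (NR : ℝ) - a) * t * deriv (fun t' => pdfZF N NR t' a) t
        + ((NR : ℝ) - 2) * t * pdfZF N NR t a
        - ((N : ℝ) - 1) * ((N : ℝ) - 2) * deriv (fun t' => pdfZF N NR t' a) t
        + ((N : ℝ) - 1) * (2 - (NR : ℝ) - a) * pdfZF N NR t a = 0 := by
  have hfun : (fun t => pdfZF N NR t a) = SS N NR a 0 := pdfZF_eq_SS hN a
  constructor
  · rw [hfun]
    exact contDiffOn_infty.2 fun m => contDiffOn_SS hN hNNR a m 0
  · intro t ht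
    have ht' : (0:ℝ) ≤ t := le_of_lt ht
    have htI : t ∈ Set.Ioi (0:ℝ) := ht
    have h0 : pdfZF N NR t a = SS N NR a 0 t := congrFun hfun t
    have h1 : deriv (fun t' => pdfZF N NR t' a) t = SS N NR a 1 t := by
      rw [hfun]; exact deriv_SS hN hNNR a 0 htI
    have h2 : iteratedDeriv 2 (fun t' => pdfZF N NR t' a) t = SS N NR a 2 t := by
      rw [hfun]; exact iteratedDeriv_SS hN hNNR a 2 htI
    have h3 : iteratedDeriv 3 (fun t' => pdfZF N NR t' a) t = SS N NR a 3 t := by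
      rw [hfun]; exact iteratedDeriv_SS hN hNNR a 3 htI
    rw [h0, h1, h2, h3]
    have hs : ∀ q, HasSum (fun n => U N NR a q n t) (SS N NR a q t) :=
      fun q => (summable_U hN hNNR a q ht').hasSum
    -- telescoping: the series of AA + BB sums to zero
    have hBsum : Summable (fun n => BB N NR a n t) := by
      have := (((hs 1).summable.mul_left t).sub ((hs 0).summable.mul_left ((N:ℝ)-1))).mul_left a
      simpa [BB, mul_sub] using this
    have hB : HasSum (fun n => BB N NR a n t) (∑' n, BB N NR a n t) := hBsum.hasSum
    have hA1 : HasSum (fun n => AA N NR a (n+1) t) (-(∑' n, BB N NR a n t)) := by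
      have e : (fun n => AA N NR a (n+1) t) = (fun n => -(BB N NR a n t)) :=
        funext fun n => AA_succ hN hNNR a n t
      rw [e]; exact hB.neg
    have hA : HasSum (fun n => AA N NR a n t) (-(∑' n, BB N NR a n t)) := by
      have := (hasSum_nat_add_iff (f := fun n => AA N NR a n t) 1).1 hA1
      simpa [AA_zero] using this
    have hAB : HasSum (fun n => AA N NR a n t + BB N NR a n t) 0 := by
      simpa using hA.add hB
    have Hb := ((((((((hs 3).mul_left (-t^2)).add ((hs 2).mul_left (-(2*t^2)))).add
      ((hs 1).mul_left (-t^2))).add ((hs 2).mul_left ((2*(N:ℝ)-4)*t))).add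
      ((hs 1).mul_left (-(6-2*(N:ℝ)-(NR:ℝ)-a)*t))).add
      ((hs 0).mul_left (((NR:ℝ)-2)*t))).add
      ((hs 1).mul_left (-(((N:ℝ)-1)*((N:ℝ)-2))))).add
      ((hs 0).mul_left (((N:ℝ)-1)*(2-(NR:ℝ)-a)))
    have H : HasSum (fun n => AA N NR a n t + BB N NR a n t)
        (-t^2 * SS N NR a 3 t + -(2*t^2) * SS N NR a 2 t + -t^2 * SS N NR a 1 t
          + (2*(N:ℝ)-4)*t * SS N NR a 2 t + -(6-2*(N:ℝ)-(NR:ℝ)-a)*t * SS N NR a 1 t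
          + ((NR:ℝ)-2)*t * SS N NR a 0 t + -(((N:ℝ)-1)*((N:ℝ)-2)) * SS N NR a 1 t
          + ((N:ℝ)-1)*(2-(NR:ℝ)-a) * SS N NR a 0 t) := by
      convert Hb using 1
      rfl
      funext n
      simp only [AA, BB, U]
      ring
    have hV := H.unique hAB
    linear_combination hV
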